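/- Let G be an abelian bi-Δ-group and k ≤ n. For every x ∈ 𝔥_k G, all the faces d_0(H_{k,n}(x)), d_1(H_{k,n}(x)), …, d_n(H_{k,n}(x)) coincide; in particular H_{k,n}(x) ∈ 𝔥_n G, so the James–Hopf homomorphism restricts to a group homomorphism H_{k,n} : 𝔥_k G → 𝔥_n G. -/
import Mathlib


universe u

section

variable (G : ℕ → Type u) [∀ n, AddCommGroup (G n)]
variable (d : ∀ n : ℕ, ℕ → (G (n + 1) →+ G n))
variable (δ : ∀ n : ℕ, ℕ → (G n →+ G (n + 1)))

/-- The axioms of an (abelian, additively written) bi-Δ-group: a sequence of groups `G n`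
with faces `d n j : G (n+1) →+ G n` (for `j ≤ n+1`) and cofaces
`δ n i : G n →+ G (n+1)` (for `i ≤ n+1`), satisfying the simplicial-type identities. -/
structure IsBiDelta : Prop where
  face_face : ∀ n i j : ℕ, i ≤ j → j ≤ n + 1 → ∀ x : G (n + 2),
    d n i (d (n + 1) (j + 1) x) = d n j (d (n + 1) i x)
  coface_coface : ∀ n i j : ℕ, j ≤ i → i ≤ n + 1 → ∀ x : G n,
    δ (n + 1) j (δ n i x) = δ (n + 1) (i + 1) (δ n j x)
  face_coface_lt : ∀ n i j : ℕ, j ≤ i → i ≤ n + 1 → ∀ x : G (n + 1),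
    d (n + 1) j (δ (n + 1) (i + 1) x) = δ n i (d n j x)
  face_coface_eq : ∀ n i : ℕ, i ≤ n + 1 → ∀ x : G n, d n i (δ n i x) = x
  face_coface_gt : ∀ n i j : ℕ, i ≤ j → j ≤ n + 1 → ∀ x : G (n + 1),
    d (n + 1) (j + 1) (δ (n + 1) i x) = δ n i (d n j x)

/-- The `n`-th Cohen group `𝔥_n G = {x ∈ G_n : d_0 x = d_1 x = ⋯ = d_n x}`
(with `𝔥_0 G = G_0`), as a subgroup of `G n`. -/
def cohenAll : ∀ n : ℕ, AddSubgroup (G n)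
  | 0 => ⊤
  | m + 1 =>
    { carrier := { x : G (m + 1) | ∀ j, j ≤ m + 1 → d m j x = d m 0 x }
      add_mem' := fun {a b} ha hb j hj => by
        simp only [Set.mem_setOf_eq] at ha hb ⊢
        rw [map_add, map_add, ha j hj, hb j hj]
      zero_mem' := fun j hj => by simp
      neg_mem' := fun {a} ha j hj => by
        simp only [Set.mem_setOf_eq] at ha ⊢
        rw [map_neg, map_neg, ha j hj] }

/-- Iterated cofaces `d^{c(r-1)} d^{c(r-2)} ⋯ d^{c(0)}(x)` along a tuple `c` of coface
indices (`c 0` is applied first, at level `k`). -/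
def iterCoface (k : ℕ) : ∀ r : ℕ, (Fin r → ℕ) → G k → G (k + r)
  | 0, _, x => x
  | r + 1, c, x => δ (k + r) (c (Fin.last r)) (iterCoface k r (fun i => c i.castSucc) x)

open Classical in
/-- The James–Hopf homomorphism `H_{k,n} : G_k → G_n` (`n = k + r`): the sum, over all
strictly increasing tuples `0 ≤ i_1 < i_2 < ⋯ < i_{n-k} ≤ n`, of
`d^{i_{n-k}} d^{i_{n-k-1}} ⋯ d^{i_1}(x)`. -/
noncomputable def jamesHopf (k r : ℕ) (x : G k) : G (k + r) :=
  ∑ c ∈ Finset.univ.filter (fun c : Fin r → Fin (k + r + 1) => StrictMono c),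
    iterCoface G δ k r (fun i => (c i : ℕ)) x

end



section

variable (G : ℕ → Type u) [∀ n, AddCommGroup (G n)]
variable (d : ∀ n : ℕ, ℕ → (G (n + 1) →+ G n))
variable (δ : ∀ n : ℕ, ℕ → (G n →+ G (n + 1)))

/-- stack of cofaces along `v 0, v 1, …, v (r-1)` (ℕ-indexed tuple). -/
def TT (k r : ℕ) (v : ℕ → ℕ) (x : G k) : G (k + r) := iterCoface G δ k r (fun i => v i) x

/-- cast between propositionally equal levels -/
def castG {m n : ℕ} (h : m = n) : G m ≃+ G n := by subst h; exact AddEquiv.refl _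

end

section lemmas

variable {G : ℕ → Type u} [∀ n, AddCommGroup (G n)]
variable {d : ∀ n : ℕ, ℕ → (G (n + 1) →+ G n)}
variable {δ : ∀ n : ℕ, ℕ → (G n →+ G (n + 1))}

lemma castG_castG {a b c : ℕ} (h1 : a = b) (h2 : b = c) (z : G a) :
    castG G h2 (castG G h1 z) = castG G (h1.trans h2) z := by subst h1; subst h2; rfl

lemma castG_delta {m n : ℕ} (h : m = n) (h' : m + 1 = n + 1) (i : ℕ) (z : G m) :
    castG G h' (δ m i z) = δ n i (castG G h z) := by subst h; rfl

lemma TT_succ (k r : ℕ) (v : ℕ → ℕ) (x : G k) :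
    TT G δ k (r + 1) v x = δ (k + r) (v r) (TT G δ k r v x) := by
  show iterCoface G δ k (r+1) _ x = _
  rw [iterCoface]
  simp [TT, Fin.last]

lemma TT_congr (k r : ℕ) (v w : ℕ → ℕ) (x : G k) (h : ∀ i, i < r → v i = w i) :
    TT G δ k r v x = TT G δ k r w x := by
  induction r with
  | zero => rfl
  | succ r ih =>
      rw [TT_succ, TT_succ, ih (fun i hi => h i (by omega)), h r (by omega)]

lemma TT_add (k r : ℕ) (v : ℕ → ℕ) (x y : G k) :
    TT G δ k r v (x + y) = TT G δ k r v x + TT G δ k r v y := by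
  induction r with
  | zero => rfl
  | succ r ih => rw [TT_succ, TT_succ, TT_succ, ih, map_add]

lemma iterCoface_add (k r : ℕ) (c : Fin r → ℕ) (x y : G k) :
    iterCoface G δ k r c (x + y) = iterCoface G δ k r c x + iterCoface G δ k r c y := by
  induction r with
  | zero => rfl
  | succ r ih => rw [iterCoface, iterCoface, iterCoface, ih, map_add]

/-- ℕ-extension of a Fin-tuple, with strictly large sentinel values -/
def vOf {r N : ℕ} (c : Fin r → Fin N) : ℕ → ℕ :=
  fun t => if h : t < r then (c ⟨t, h⟩ : ℕ) else t + N

lemma vOf_lt {r N : ℕ} (c : Fin r → Fin N) {t : ℕ} (ht : t < r) : vOf c t < N := by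
  simp only [vOf, dif_pos ht]; exact (c ⟨t, ht⟩).isLt

lemma vOf_mono {r N : ℕ} {c : Fin r → Fin N} (hc : StrictMono c) {a b : ℕ}
    (hab : a < b) (hb : b < r) : vOf c a < vOf c b := by
  have ha : a < r := by omega
  simp only [vOf, dif_pos ha, dif_pos hb]
  exact hc (show (⟨a, ha⟩ : Fin r) < ⟨b, hb⟩ from Fin.mk_lt_mk.mpr hab)

lemma vOf_sentinel_ge {r N : ℕ} (c : Fin r → Fin N) {t : ℕ} (ht : ¬ t < r) : N ≤ vOf c t := by
  simp only [vOf, dif_neg ht]; omega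

lemma jh_eq (k r : ℕ) (x : G k) :
    jamesHopf G δ k r x = ∑ c ∈ Finset.univ.filter (fun c : Fin r → Fin (k + r + 1) => StrictMono c),
      TT G δ k r (vOf c) x := by
  refine Finset.sum_congr rfl (fun c _ => ?_)
  show iterCoface G δ k r _ x = iterCoface G δ k r _ x
  congr 1
  funext i
  simp [vOf, i.isLt, Fin.eta]

lemma jh_zero (k : ℕ) (x : G k) : jamesHopf G δ k 0 x = x := by
  unfold jamesHopf
  rw [Finset.filter_true_of_mem (fun c _ => Subsingleton.strictMono c)]
  rw [Fintype.sum_unique]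
  rfl

lemma jh_add (k r : ℕ) (x y : G k) :
    jamesHopf G δ k r (x + y) = jamesHopf G δ k r x + jamesHopf G δ k r y := by
  unfold jamesHopf
  rw [← Finset.sum_add_distrib]
  exact Finset.sum_congr rfl (fun c _ => iterCoface_add k r _ x y)

end lemmas

section push

variable {G : ℕ → Type u} [∀ n, AddCommGroup (G n)]
variable {d : ∀ n : ℕ, ℕ → (G (n + 1) →+ G n)}
variable {δ : ∀ n : ℕ, ℕ → (G n →+ G (n + 1))}

/-- shift values above j down by one -/
def shf (v : ℕ → ℕ) (j : ℕ) : ℕ → ℕ := fun i => if v i < j then v i else v i - 1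

/-- shift values ≥ j up by one -/
def unshf (v : ℕ → ℕ) (j : ℕ) : ℕ → ℕ := fun i => if v i < j then v i else v i + 1

/-- delete the entry with value j, shifting larger values down -/
def delSh (v : ℕ → ℕ) (j : ℕ) : ℕ → ℕ := fun i => if v i < j then v i else v (i+1) - 1

/-- insert an entry with value j, shifting values ≥ j up -/
def insSh (v : ℕ → ℕ) (j : ℕ) : ℕ → ℕ := fun i =>
  if v i < j then v i else if i = 0 then j else if v (i-1) < j then j else v (i-1) + 1

lemma mono_gap {v : ℕ → ℕ} {r : ℕ} (hm : ∀ a b, a < b → b ≤ r → v a < v b) :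
    ∀ a b, a ≤ b → b ≤ r → v a + (b - a) ≤ v b := by
  intro a b hab hbr
  induction b with
  | zero =>
      have h0 : a = 0 := by omega
      rw [h0]
      simp
  | succ b ih =>
      rcases Nat.eq_or_lt_of_le hab with h | h
      · subst h; simp
      · have h1 := ih (by omega) (by omega)
        have h2 := hm b (b+1) (by omega) hbr
        omega

lemma PL_GT (h : IsBiDelta G d δ) (k' : ℕ) : ∀ (r : ℕ) (v : ℕ → ℕ) (x : G (k'+1)) (j : ℕ),
    (∀ i, i ≤ r → v i + (r + 1 - i) ≤ j) → j ≤ (k'+1) + (r+1) →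
    d ((k'+1) + r) j (TT G δ (k'+1) (r+1) v x)
      = castG G (by omega : k' + (r+1) = (k'+1) + r) (TT G δ k' (r+1) v (d k' (j - (r+1)) x)) := by
  intro r
  induction r with
  | zero =>
      intro v x j hgap hj
      obtain ⟨j', rfl⟩ : ∃ j', j = j' + 1 := ⟨j - 1, by have := hgap 0 (by omega); omega⟩
      rw [TT_succ, TT_succ]
      show d (k'+1) (j'+1) (δ (k'+1) (v 0) (TT G δ (k'+1) 0 v x)) = _
      rw [h.face_coface_gt k' (v 0) j' (by have := hgap 0 (by omega); omega) (by omega)]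
      show δ k' (v 0) (d k' j' x) = castG G _ (δ k' (v 0) (d k' (j' + 1 - 1) x))
      rw [Nat.add_sub_cancel]
      rfl
  | succ r ih =>
      intro v x j hgap hj
      obtain ⟨j', rfl⟩ : ∃ j', j = j' + 1 := ⟨j - 1, by have := hgap 0 (by omega); omega⟩
      have hsub : j' + 1 - (r + 1 + 1) = j' - (r+1) := by omega
      rw [TT_succ, hsub]
      show d (k'+1+r+1) (j'+1) (δ (k'+1+r+1) (v (r+1)) (TT G δ (k'+1) (r+1) v x)) = _
      rw [h.face_coface_gt ((k'+1)+r) (v (r+1)) j'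
        (by have := hgap (r+1) (by omega); omega) (by omega)]
      rw [ih v x j' (fun i hi => by have := hgap i (by omega); omega) (by omega)]
      conv_rhs => rw [TT_succ]
      exact (castG_delta (G := G) (δ := δ) (show k' + (r+1) = k'+1+r by omega)
        (show k' + (r+1+1) = k'+1+(r+1) by omega) (v (r+1)) _).symm

lemma PL_B (h : IsBiDelta G d δ) (k' : ℕ) : ∀ (r : ℕ) (v : ℕ → ℕ) (x : G (k'+1)) (j : ℕ),
    (∀ a b, a < b → b ≤ r → v a < v b) →
    (∀ i, i ≤ r → v i ≠ j) →
    (∀ i, i ≤ r → v i ≤ (k'+1) + (r+1)) →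
    j ≤ (k'+1) + (r+1) →
    (∀ t, t ≤ k'+1 → d k' t x = d k' 0 x) →
    d ((k'+1) + r) j (TT G δ (k'+1) (r+1) v x)
      = castG G (by omega : k' + (r+1) = (k'+1) + r) (TT G δ k' (r+1) (shf v j) (d k' 0 x)) := by
  intro r
  induction r with
  | zero =>
      intro v x j hm hne hbd hj hx
      rcases Nat.lt_or_ge (v 0) j with hlt | hge
      · rw [PL_GT h k' 0 v x j (fun i hi => by
            have h0 : i = 0 := by omega
            rw [h0]
            omega) hj]
        rw [hx (j - 1) (by omega)]
        congr 1
        refine TT_congr _ _ _ _ _ (fun i hi => ?_)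
        have h0 : i = 0 := by omega
        rw [h0]
        simp [shf, hlt]
      · have hgt : j < v 0 := by have := hne 0 (by omega); omega
        rw [TT_succ, TT_succ]
        obtain ⟨w, hw⟩ : ∃ w, v 0 = w + 1 := ⟨v 0 - 1, by omega⟩
        rw [hw]
        show d (k'+1) j (δ (k'+1) (w+1) (TT G δ (k'+1) 0 v x)) = _
        rw [h.face_coface_lt k' w j (by omega) (by have := hbd 0 (by omega); omega)]
        show δ k' w (d k' j x) = _
        rw [hx j (by have := hbd 0 (by omega); omega)]
        have hsh : shf v j 0 = w := by
          simp only [shf, if_neg (by omega : ¬ v 0 < j)]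
          omega
        rw [hsh]
        rfl
  | succ r ih =>
      intro v x j hm hne hbd hj hx
      rcases Nat.lt_or_ge (v (r+1)) j with hlt | hge
      · rw [PL_GT h k' (r+1) v x j (fun i hi => by
            have hg := mono_gap hm i (r+1) hi (by omega)
            omega) hj]
        rw [hx (j - (r+2)) (by omega)]
        congr 1
        refine TT_congr _ _ _ _ _ (fun i hi => ?_)
        have hvi : v i < j := by
          rcases Nat.lt_or_ge i (r+1) with h' | h'
          · exact lt_trans (hm i (r+1) h' (by omega)) hlt
          · have h0 : i = r + 1 := by omega
            rw [h0]; exact hlt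
        simp [shf, hvi]
      · have hgt : j < v (r+1) := by have := hne (r+1) (by omega); omega
        rw [TT_succ]
        obtain ⟨w, hw⟩ : ∃ w, v (r+1) = w + 1 := ⟨v (r+1) - 1, by omega⟩
        rw [hw]
        show d (k'+1+r+1) j (δ (k'+1+r+1) (w+1) (TT G δ (k'+1) (r+1) v x)) = _
        rw [h.face_coface_lt ((k'+1)+r) w j (by omega)
          (by have := hbd (r+1) (by omega); omega)]
        rw [ih v x j (fun a b hab hb => hm a b hab (by omega))
          (fun i hi => hne i (by omega))
          (fun i hi => by
            have h1 := hm i (r+1) (by omega) (by omega)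
            have h2 := hbd (r+1) (by omega)
            omega)
          (by have := hbd (r+1) (by omega); omega) hx]
        have hsh : shf v j (r+1) = w := by
          simp only [shf, if_neg (by omega : ¬ v (r+1) < j)]
          omega
        conv_rhs => rw [TT_succ, hsh]
        exact (castG_delta (G := G) (δ := δ) (show k' + (r+1) = k'+1+r by omega)
          (show k' + (r+1+1) = k'+1+(r+1) by omega) w _).symm

lemma PL_A (h : IsBiDelta G d δ) (k : ℕ) : ∀ (r : ℕ) (v : ℕ → ℕ) (x : G k) (j m : ℕ),
    (∀ a b, a < b → b ≤ r → v a < v b) →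
    (∀ i, i ≤ r → v i ≤ k + r + 1) →
    m ≤ r → v m = j →
    d (k + r) j (TT G δ k (r+1) v x) = TT G δ k r (delSh v j) x := by
  intro r
  induction r with
  | zero =>
      intro v x j m hm hbd hmr hvm
      have h0 : m = 0 := by omega
      subst h0
      rw [TT_succ]
      show d k j (δ (k+0) (v 0) (TT G δ k 0 v x)) = _
      rw [hvm]
      exact h.face_coface_eq k j (by have := hbd 0 (by omega); omega) x
  | succ r ih =>
      intro v x j m hm hbd hmr hvm
      rw [TT_succ]
      rcases Nat.lt_or_ge m (r+1) with hmlt | hmge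
      · have htop : j < v (r+1) := hvm ▸ hm m (r+1) hmlt (by omega)
        obtain ⟨w, hw⟩ : ∃ w, v (r+1) = w + 1 := ⟨v (r+1) - 1, by omega⟩
        rw [hw]
        show d (k+r+1) j (δ (k+r+1) (w+1) (TT G δ k (r+1) v x)) = _
        rw [h.face_coface_lt (k+r) w j (by omega) (by have := hbd (r+1) (by omega); omega)]
        rw [ih v x j m (fun a b hab hb => hm a b hab (by omega))
          (fun i hi => by
            have h1 := hm i (r+1) (by omega) (by omega)
            have h2 := hbd (r+1) (by omega)
            omega)
          (by omega) hvm]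
        have hge' : ¬ v r < j := by
          rcases Nat.lt_or_ge m r with h'' | h''
          · have := hm m r h'' (by omega); omega
          · have h0 : m = r := by omega
            rw [h0] at hvm
            omega
        have hsh : delSh v j r = w := by
          simp only [delSh, if_neg hge']
          omega
        conv_rhs => rw [TT_succ, hsh]
      · have h0 : m = r + 1 := by omega
        subst h0
        rw [hvm]
        show d (k+r+1) j (δ (k+r+1) j (TT G δ k (r+1) v x)) = _
        rw [h.face_coface_eq (k+r+1) j (by have := hbd (r+1) (by omega); omega)
          (TT G δ k (r+1) v x)]
        refine TT_congr _ _ _ _ _ (fun i hi => ?_)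
        have hvi : v i < j := hvm ▸ hm i (r+1) (by omega) (by omega)
        simp [delSh, hvi]

end push

section kzero

variable {G : ℕ → Type u} [∀ n, AddCommGroup (G n)]
variable {d : ∀ n : ℕ, ℕ → (G (n + 1) →+ G n)}
variable {δ : ∀ n : ℕ, ℕ → (G n →+ G (n + 1))}

/-- the bottom "stuck block" `d₁ ∘ δ⁰ : G 0 → G 0` -/
def Bmap (d : ∀ n : ℕ, ℕ → (G (n + 1) →+ G n)) (δ : ∀ n : ℕ, ℕ → (G n →+ G (n + 1))) :
    G 0 → G 0 := fun x => d 0 1 (δ 0 0 x)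

lemma key0 (h : IsBiDelta G d δ) (x : G 0) : d 0 0 (δ 0 1 x) = Bmap d δ x := by
  have keyA : d 0 0 (δ 0 1 x) = d 0 1 (δ 0 0 (d 0 0 (δ 0 1 x))) := by
    calc d 0 0 (δ 0 1 x)
        = d 0 0 (d 1 2 (δ 1 2 (δ 0 1 x))) := by
          rw [h.face_coface_eq 1 2 (by omega)]
      _ = d 0 0 (d 1 2 (δ 1 1 (δ 0 1 x))) := by
          rw [h.coface_coface 0 1 1 le_rfl (by omega)]
      _ = d 0 1 (d 1 0 (δ 1 1 (δ 0 1 x))) := by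
          rw [h.face_face 0 0 1 (by omega) (by omega)]
      _ = d 0 1 (δ 0 0 (d 0 0 (δ 0 1 x))) := by
          rw [h.face_coface_lt 0 0 0 le_rfl (by omega)]
  have keyB : d 0 1 (δ 0 0 x) = d 0 1 (δ 0 0 (d 0 0 (δ 0 1 x))) := by
    calc d 0 1 (δ 0 0 x)
        = d 0 1 (d 1 2 (δ 1 2 (δ 0 0 x))) := by
          rw [h.face_coface_eq 1 2 (by omega)]
      _ = d 0 1 (d 1 2 (δ 1 0 (δ 0 1 x))) := by
          rw [h.coface_coface 0 1 0 (by omega) (by omega)]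
      _ = d 0 1 (d 1 1 (δ 1 0 (δ 0 1 x))) := by
          rw [h.face_face 0 1 1 le_rfl (by omega)]
      _ = d 0 1 (δ 0 0 (d 0 0 (δ 0 1 x))) := by
          rw [h.face_coface_gt 0 0 0 le_rfl (by omega)]
  exact keyA.trans keyB.symm

/-- identity tuple -/
def idf : ℕ → ℕ := fun i => i
/-- shifted-up tuple (1,2,3,…) -/
def sf : ℕ → ℕ := fun i => i + 1

lemma PL0_lo (h : IsBiDelta G d δ) : ∀ (t : ℕ) (x : G 0),
    d (0+t) (t+1) (TT G δ 0 (t+1) idf x) = TT G δ 0 t sf (Bmap d δ x) := by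
  intro t
  induction t with
  | zero => intro x; rfl
  | succ t ih =>
      intro x
      rw [TT_succ]
      conv_rhs => rw [TT_succ]
      exact (h.face_coface_gt (0+t) (t+1) (t+1) le_rfl (by omega)
        (TT G δ 0 (t+1) idf x)).trans (congrArg _ (ih x))

lemma PL0_lo0 (h : IsBiDelta G d δ) : ∀ (t : ℕ) (x : G 0),
    d (0+t) 0 (TT G δ 0 (t+1) sf x) = TT G δ 0 t sf (Bmap d δ x) := by
  intro t
  induction t with
  | zero => intro x; exact key0 h x
  | succ t ih =>
      intro x
      rw [TT_succ]
      conv_rhs => rw [TT_succ]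
      exact (h.face_coface_lt (0+t) (t+1) 0 (by omega) (by omega)
        (TT G δ 0 (t+1) sf x)).trans (congrArg _ (ih x))

/-- the complement tuple (0,1,…,ĵ,…,r+1) -/
def complF (j : ℕ) : ℕ → ℕ := fun i => if i < j then i else i + 1

lemma PL0_full (h : IsBiDelta G d δ) : ∀ (r j : ℕ) (x : G 0), j ≤ r + 1 →
    d (0+r) j (TT G δ 0 (r+1) (complF j) x) = TT G δ 0 r sf (Bmap d δ x) := by
  intro r
  induction r with
  | zero =>
      intro j x hj
      rcases (by omega : j = 0 ∨ j = 1) with h0 | h0 <;> subst h0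
      · exact key0 h x
      · rfl
  | succ r ih =>
      intro j x hj
      rcases Nat.lt_or_ge j (r+2) with hlt | hge
      · -- top coface index is r+2 > j : LT step
        rw [TT_succ]
        have htop : complF j (r+1) = r + 2 := by
          simp only [complF, if_neg (by omega : ¬ r + 1 < j)]
        rw [htop]
        conv_rhs => rw [TT_succ]
        exact (h.face_coface_lt (0+r) (r+1) j (by omega) (by omega)
          (TT G δ 0 (r+1) (complF j) x)).trans (congrArg _ (ih j x (by omega)))
      · -- j = r+2 : the tuple is the identity, pure GT descent
        have hjr : j = r + 2 := by omega
        subst hjr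
        have hcc : TT G δ 0 (r+2) (complF (r+2)) x = TT G δ 0 (r+2) idf x :=
          TT_congr _ _ _ _ _ (fun i hi => by simp [complF, idf]; omega)
        rw [hcc]
        exact PL0_lo h (r+1) x

/-- the complement tuple as a strictly monotone Fin-tuple -/
def complFin (r' j : ℕ) : Fin (r'+1) → Fin (r'+2) :=
  fun i => ⟨if (i : ℕ) < j then i else i + 1, by rcases i with ⟨i, hi⟩; dsimp; split <;> omega⟩

lemma vOf_complFin (r' j : ℕ) : ∀ i, i < r' + 1 → vOf (complFin r' j) i = complF j i := by
  intro i hi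
  simp only [vOf, dif_pos hi, complFin, complF]

open Classical in
lemma filterB_zero (r' j : ℕ) (hj : j ≤ r' + 1) :
    (Finset.univ.filter
      (fun c : Fin (r'+1) → Fin (r'+2) => StrictMono c ∧ ¬ ∃ m, (c m : ℕ) = j))
      = {complFin r' j} := by
  ext c
  simp only [Finset.mem_filter, Finset.mem_univ, true_and, Finset.mem_singleton]
  constructor
  · rintro ⟨hc, hne⟩
    have hv : ∀ t : Fin (r'+1), vOf c (t : ℕ) = (c t : ℕ) := fun t => by
      simp only [vOf, dif_pos t.isLt, Fin.eta]
    have hm' : ∀ a b, a < b → b ≤ r' → vOf c a < vOf c b :=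
      fun a b h1 h2 => vOf_mono hc h1 (by omega)
    have gap := mono_gap hm'
    have hne' : ∀ t, t ≤ r' → vOf c t ≠ j := by
      intro t ht hvt
      exact hne ⟨⟨t, by omega⟩, by rw [← hv ⟨t, by omega⟩]; exact hvt⟩
    have hlo : ∀ t, t ≤ r' → t ≤ vOf c t := fun t ht => by
      have := gap 0 t (by omega) ht; omega
    have hhi : ∀ t, t ≤ r' → vOf c t ≤ t + 1 := fun t ht => by
      have := gap t r' ht le_rfl
      have := vOf_lt c (show r' < r' + 1 by omega)
      omega
    funext i
    apply Fin.ext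
    rw [← hv i]
    show vOf c (i : ℕ) = _
    simp only [complFin]
    rcases i with ⟨i, hi⟩
    simp only
    have h1 := hlo i (by omega)
    have h2 := hhi i (by omega)
    have h3 := hne' i (by omega)
    split
    · -- i < j : show vOf c i = i
      rename_i hij
      by_contra hcon
      -- then vOf c i = i + 1 and vOf c (j-1) = j, contradiction
      have g1 := gap i (j-1) (by omega) (by omega)
      have h4 := hhi (j-1) (by omega)
      have h5 := hne' (j-1) (by omega)
      omega
    · -- j ≤ i : show vOf c i = i + 1
      rename_i hij
      by_contra hcon
      have g1 := gap j i (by omega) (by omega)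
      have h4 := hlo j (by omega)
      have h5 := hne' j (by omega)
      omega
  · rintro rfl
    constructor
    · intro a b hab
      have : (a : ℕ) < (b : ℕ) := hab
      show ((complFin r' j a : Fin (r'+2)) : ℕ) < ((complFin r' j b : Fin (r'+2)) : ℕ)
      simp only [complFin]
      split <;> split <;> omega
    · rintro ⟨m, hm⟩
      simp only [complFin] at hm
      rcases m with ⟨m, hmlt⟩
      simp only at hm
      split at hm <;> omega

/-- complement tuple with a cast-friendly bound -/
def complFin' (r' j N : ℕ) (hN : N = r' + 2) : Fin (r'+1) → Fin N :=
  fun i => ⟨if (i : ℕ) < j then i else i + 1, by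
    rcases i with ⟨i, hi⟩; dsimp; split <;> omega⟩

lemma complFin'_eq (r' j : ℕ) : complFin' r' j (r'+2) rfl = complFin r' j := rfl

lemma vOf_complFin' (r' j N : ℕ) (hN : N = r' + 2) :
    ∀ i, i < r' + 1 → vOf (complFin' r' j N hN) i = complF j i := by
  subst hN
  exact vOf_complFin r' j

open Classical in
lemma filterB_zero' (r' j N : ℕ) (hN : N = r' + 2) (hj : j ≤ r' + 1) :
    ((Finset.univ.filter (fun c : Fin (r'+1) → Fin N => StrictMono c)).filter
      (fun c => ¬ ∃ m, (c m : ℕ) = j)) = {complFin' r' j N hN} := by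
  subst hN
  rw [Finset.filter_filter]
  exact filterB_zero r' j hj

end kzero

section bij

lemma vOf_monoAll {r N : ℕ} {c : Fin r → Fin N} (hc : StrictMono c) :
    ∀ a b, a < b → vOf c a < vOf c b := by
  intro a b hab
  by_cases hb : b < r
  · exact vOf_mono hc hab hb
  · have h1 : vOf c b = b + N := by simp [vOf, dif_neg hb]
    by_cases ha : a < r
    · have := vOf_lt c ha
      omega
    · have h2 : vOf c a = a + N := by simp [vOf, dif_neg ha]
      omega

/-- forward map of bijection A : delete the entry `j`, shift down -/
def toA (N r j : ℕ) (hj : j ≤ N) (hN : 0 < N) (c : Fin (r+1) → Fin (N+1)) : Fin r → Fin N :=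
  fun i => ⟨delSh (vOf c) j i, by
    have h1 : vOf c ((i:ℕ)+1) < N + 1 := vOf_lt c (by omega)
    simp only [delSh]
    split <;> omega⟩

/-- backward map of bijection A : insert an entry `j`, shift up -/
def fromA (N r j : ℕ) (hj : j ≤ N) (c' : Fin r → Fin N) : Fin (r+1) → Fin (N+1) :=
  fun i => ⟨insSh (vOf c') j i, by
    simp only [insSh]
    split
    · omega
    · split
      · omega
      · split
        · omega
        · rename_i h1 h2 h3
          have h4 : (i:ℕ) - 1 < r := by have := i.isLt; omega
          have := vOf_lt c' h4
          omega⟩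

/-- forward map of bijection B : shift entries above `j` down -/
def toB (N r j : ℕ) (hj : j ≤ N) (hN : 0 < N) (c : Fin r → Fin (N+1)) : Fin r → Fin N :=
  fun i => ⟨shf (vOf c) j i, by
    have h1 : vOf c (i:ℕ) < N + 1 := vOf_lt c i.isLt
    simp only [shf]
    split <;> omega⟩

/-- backward map of bijection B : shift entries ≥ `j` up -/
def fromB (N r j : ℕ) (hj : j ≤ N) (c' : Fin r → Fin N) : Fin r → Fin (N+1) :=
  fun i => ⟨unshf (vOf c') j i, by
    have h1 : vOf c' (i:ℕ) < N := vOf_lt c' i.isLt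
    simp only [unshf]
    split <;> omega⟩

lemma vOf_toA (N r j : ℕ) (hj : j ≤ N) (hN : 0 < N) (c : Fin (r+1) → Fin (N+1))
    {t : ℕ} (ht : t < r) : vOf (toA N r j hj hN c) t = delSh (vOf c) j t := by
  simp [vOf, toA, dif_pos ht]

lemma vOf_fromA (N r j : ℕ) (hj : j ≤ N) (c' : Fin r → Fin N)
    {t : ℕ} (ht : t < r + 1) : vOf (fromA N r j hj c') t = insSh (vOf c') j t := by
  simp [vOf, fromA, dif_pos ht]

lemma vOf_toB (N r j : ℕ) (hj : j ≤ N) (hN : 0 < N) (c : Fin r → Fin (N+1))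
    {t : ℕ} (ht : t < r) : vOf (toB N r j hj hN c) t = shf (vOf c) j t := by
  simp [vOf, toB, dif_pos ht]

lemma vOf_fromB (N r j : ℕ) (hj : j ≤ N) (c' : Fin r → Fin N)
    {t : ℕ} (ht : t < r) : vOf (fromB N r j hj c') t = unshf (vOf c') j t := by
  simp [vOf, fromB, dif_pos ht]

lemma vOf_apply {r N : ℕ} (c : Fin r → Fin N) (i : Fin r) : vOf c (i : ℕ) = (c i : ℕ) := by
  simp [vOf, i.isLt, Fin.eta]

/-- description of the inserted tuple by cases w.r.t. the insertion position -/
lemma insSh_eq {r N j : ℕ} (c' : Fin r → Fin N) (hSM : StrictMono c') (hj : j ≤ N)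
    (hex : ∃ t, ¬ vOf c' t < j) :
    ∀ t, insSh (vOf c') j t =
      (if t < Nat.find hex then vOf c' t else if t = Nat.find hex then j
        else vOf c' (t-1) + 1) := by
  have hmono := vOf_monoAll hSM
  set p := Nat.find hex with hp
  have hp2 : ¬ vOf c' p < j := Nat.find_spec hex
  have hp1 : ∀ t, t < p → vOf c' t < j := fun t ht => by
    by_contra hcon
    exact absurd (Nat.find_min hex ht) (by simp [hcon])
  intro t
  rcases Nat.lt_trichotomy t p with h' | h' | h'
  · simp only [insSh, if_pos (hp1 t h'), if_pos h']
  · rw [h']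
    simp only [insSh, if_neg hp2, if_neg (by omega : ¬ p < p), if_pos rfl]
    rcases Nat.eq_zero_or_pos p with h0 | h0
    · simp [h0]
    · rw [if_neg (by omega), if_pos (hp1 (p-1) (by omega))]
      simp
  · have h1 : ¬ vOf c' t < j := by
      rcases Nat.eq_or_lt_of_le (by omega : p ≤ t) with h'' | h''
      · rw [← h'']; exact hp2
      · have := hmono p t h''; omega
    have h2 : ¬ vOf c' (t-1) < j := by
      rcases Nat.eq_or_lt_of_le (by omega : p ≤ t - 1) with h'' | h''
      · rw [← h'']; exact hp2
      · have := hmono p (t-1) h''; omega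
    simp only [insSh, if_neg h1, if_neg (by omega : ¬ t = 0), if_neg h2,
      if_neg (by omega : ¬ t < p), if_neg (by omega : ¬ t = p)]

open Classical in
/-- re-indexing of the "cancelled" (A) part of the face of the James-Hopf sum -/
lemma sumA {M : Type*} [AddCommMonoid M] (N r j : ℕ) (hj : j ≤ N) (hN : 0 < N)
    (F : (ℕ → ℕ) → M) (HF : ∀ v w, (∀ i, i < r → v i = w i) → F v = F w) :
    ∑ c ∈ ((Finset.univ.filter (fun c : Fin (r+1) → Fin (N+1) => StrictMono c)).filter
        (fun c => ∃ m, (c m : ℕ) = j)), F (delSh (vOf c) j)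
    = ∑ c ∈ Finset.univ.filter (fun c : Fin r → Fin N => StrictMono c), F (vOf c) := by
  have memA : ∀ c : Fin (r+1) → Fin (N+1),
      c ∈ ((Finset.univ.filter (fun c : Fin (r+1) → Fin (N+1) => StrictMono c)).filter
        (fun c => ∃ m, (c m : ℕ) = j)) ↔ StrictMono c ∧ ∃ m, (c m : ℕ) = j := by
    intro c
    simp [Finset.mem_filter]
  have memS : ∀ c : Fin r → Fin N,
      c ∈ Finset.univ.filter (fun c : Fin r → Fin N => StrictMono c) ↔ StrictMono c := by
    intro c; simp [Finset.mem_filter]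
  have sentB : ∀ (c' : Fin r → Fin N), ∃ t, ¬ vOf c' t < j := by
    intro c'
    refine ⟨r, ?_⟩
    have := vOf_sentinel_ge c' (show ¬ r < r by omega)
    omega
  refine Finset.sum_bij' (fun c _ => toA N r j hj hN c) (fun c' _ => fromA N r j hj c')
    ?_ ?_ ?_ ?_ ?_
  · -- toA lands in SM filter
    intro c hc
    have hSM : StrictMono c := ((memA c).1 hc).1
    have hmono := vOf_monoAll hSM
    rw [memS]
    intro a b hab
    have hab' : (a : ℕ) < b := hab
    show (toA N r j hj hN c a : ℕ) < (toA N r j hj hN c b : ℕ)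
    show delSh (vOf c) j a < delSh (vOf c) j b
    have m1 := hmono a b hab'
    have m2 := hmono (a+1) (b+1) (by omega)
    have m3 := hmono b (b+1) (by omega)
    have m4 := hmono a (a+1) (by omega)
    simp only [delSh]
    split <;> split <;> omega
  · -- fromA lands in A filter
    intro c' hc'
    have hSM : StrictMono c' := (memS c').1 hc'
    have hmono := vOf_monoAll hSM
    have hex := sentB c'
    have he := insSh_eq c' hSM hj hex
    set p := Nat.find hex with hp
    have hpr : p ≤ r := Nat.find_min' hex (by
      have := vOf_sentinel_ge c' (show ¬ r < r by omega); omega)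
    have hp2 : ¬ vOf c' p < j := Nat.find_spec hex
    have hp1 : ∀ t, t < p → vOf c' t < j := fun t ht => by
      by_contra hcon
      exact absurd (Nat.find_min hex ht) (by simp [hcon])
    rw [memA]
    constructor
    · intro a b hab
      have hab' : (a : ℕ) < b := hab
      show (fromA N r j hj c' a : ℕ) < (fromA N r j hj c' b : ℕ)
      show insSh (vOf c') j a < insSh (vOf c') j b
      rw [he a, he b]
      rcases Nat.lt_trichotomy (a:ℕ) p with ha | ha | ha <;>
        rcases Nat.lt_trichotomy (b:ℕ) p with hb | hb | hb
      · rw [if_pos ha, if_pos hb]; exact hmono a b hab'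
      · rw [if_pos ha, if_neg (by omega), if_pos hb]; exact hp1 a ha
      · rw [if_pos ha, if_neg (by omega), if_neg (by omega)]
        rcases Nat.eq_or_lt_of_le (by omega : (a:ℕ) ≤ (b:ℕ) - 1) with h'' | h''
        · rw [← h'']; omega
        · have := hmono a ((b:ℕ)-1) h''; omega
      · omega
      · omega
      · rw [if_neg (by omega), if_pos ha, if_neg (by omega), if_neg (by omega)]
        rcases Nat.eq_or_lt_of_le (by omega : p ≤ (b:ℕ) - 1) with h'' | h''
        · rw [← h'']; omega
        · have := hmono p ((b:ℕ)-1) h''; omega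
      · omega
      · omega
      · rw [if_neg (by omega), if_neg (by omega), if_neg (by omega), if_neg (by omega)]
        have := hmono ((a:ℕ)-1) ((b:ℕ)-1) (by omega)
        omega
    · refine ⟨⟨p, by omega⟩, ?_⟩
      show insSh (vOf c') j p = j
      rw [he p]
      rw [if_neg (by omega : ¬ p < p), if_pos rfl]
  · -- left inverse
    intro c hc
    obtain ⟨hSM, ⟨m, hm⟩⟩ := (memA c).1 hc
    have hmono := vOf_monoAll hSM
    have hvm : vOf c (m : ℕ) = j := by rw [vOf_apply c m]; exact hm
    funext i
    apply Fin.ext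
    show insSh (vOf (toA N r j hj hN c)) j i = (c i : ℕ)
    rw [← vOf_apply c i]
    have hir : (i : ℕ) ≤ r := by omega
    have hw : ∀ t, t < r → delSh (vOf c) j t
        = (if t < (m:ℕ) then vOf c t else vOf c (t+1) - 1) := by
      intro t ht
      rcases Nat.lt_or_ge t (m:ℕ) with h' | h'
      · rw [if_pos h', delSh, if_pos (by rw [← hvm]; exact hmono t m h')]
      · rw [if_neg (by omega), delSh, if_neg (by
          rcases Nat.eq_or_lt_of_le h' with h'' | h''
          · rw [← h'']; omega
          · have := hmono (m:ℕ) t h''; omega)]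
    have hge : ∀ t, (m:ℕ) ≤ t → t ≤ r → ¬ (vOf (toA N r j hj hN c) t < j) := by
      intro t h1 h2
      rcases Nat.lt_or_ge t r with h3 | h3
      · rw [vOf_toA N r j hj hN c h3, hw _ h3, if_neg (by omega)]
        have := hmono t (t+1) (by omega)
        have := hmono (m:ℕ) (t+1) (by omega)
        omega
      · have h4 : t = r := by omega
        have := vOf_sentinel_ge (toA N r j hj hN c) (show ¬ t < r by omega)
        omega
    rcases Nat.lt_trichotomy (i:ℕ) (m:ℕ) with h' | h' | h'
    · have h1 : (i:ℕ) < r := by have := m.isLt; omega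
      have hv1 : vOf (toA N r j hj hN c) (i:ℕ) = vOf c (i:ℕ) := by
        rw [vOf_toA N r j hj hN c h1, hw _ h1, if_pos h']
      have hlt : vOf (toA N r j hj hN c) (i:ℕ) < j := by
        rw [hv1, ← hvm]; exact hmono i m h'
      simp only [insSh, if_pos hlt]
      exact hv1
    · have hc1 := hge (i:ℕ) (by omega) hir
      simp only [insSh, if_neg hc1]
      rcases Nat.eq_zero_or_pos (i:ℕ) with h0 | h0
      · rw [if_pos h0, h']; omega
      · rw [if_neg (by omega)]
        have h1 : (i:ℕ) - 1 < r := by omega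
        have hv1 : vOf (toA N r j hj hN c) ((i:ℕ)-1) = vOf c ((i:ℕ)-1) := by
          rw [vOf_toA N r j hj hN c h1, hw _ h1, if_pos (by omega)]
        have hlt : vOf (toA N r j hj hN c) ((i:ℕ)-1) < j := by
          rw [hv1, ← hvm]; exact hmono ((i:ℕ)-1) m (by omega)
        rw [if_pos hlt, h']
        omega
    · have hc1 := hge (i:ℕ) (by omega) hir
      have hc2 := hge ((i:ℕ)-1) (by omega) (by omega)
      simp only [insSh, if_neg hc1, if_neg (by omega : ¬ (i:ℕ) = 0), if_neg hc2]
      have h1 : (i:ℕ) - 1 < r := by omega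
      rw [vOf_toA N r j hj hN c h1, hw _ h1, if_neg (by omega)]
      have h2 : (i:ℕ) - 1 + 1 = (i:ℕ) := by omega
      rw [h2]
      have := hmono (m:ℕ) (i:ℕ) h'
      omega
  · -- right inverse
    intro c' hc'
    have hSM : StrictMono c' := (memS c').1 hc'
    have hmono := vOf_monoAll hSM
    have hex := sentB c'
    have he := insSh_eq c' hSM hj hex
    set p := Nat.find hex with hp
    have hpr : p ≤ r := Nat.find_min' hex (by
      have := vOf_sentinel_ge c' (show ¬ r < r by omega); omega)
    have hp2 : ¬ vOf c' p < j := Nat.find_spec hex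
    have hp1 : ∀ t, t < p → vOf c' t < j := fun t ht => by
      by_contra hcon
      exact absurd (Nat.find_min hex ht) (by simp [hcon])
    funext i
    apply Fin.ext
    show delSh (vOf (fromA N r j hj c')) j i = (c' i : ℕ)
    rw [← vOf_apply c' i]
    have hir : (i : ℕ) < r := i.isLt
    rcases Nat.lt_or_ge (i:ℕ) p with h' | h'
    · have hv1 : vOf (fromA N r j hj c') (i:ℕ) = vOf c' (i:ℕ) := by
        rw [vOf_fromA N r j hj c' (by omega), he, if_pos h']
      have hlt : vOf (fromA N r j hj c') (i:ℕ) < j := by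
        rw [hv1]; exact hp1 _ h'
      simp only [delSh, if_pos hlt]
      exact hv1
    · have h1 : ¬ (vOf (fromA N r j hj c') (i:ℕ) < j) := by
        rw [vOf_fromA N r j hj c' (by omega), he]
        rcases Nat.eq_or_lt_of_le h' with h'' | h''
        · rw [if_neg (by omega), if_pos (by omega)]; omega
        · rw [if_neg (by omega), if_neg (by omega)]
          rcases Nat.eq_or_lt_of_le (by omega : p ≤ (i:ℕ) - 1) with h3 | h3
          · rw [← h3]; omega
          · have := hmono p ((i:ℕ)-1) h3; omega
      simp only [delSh, if_neg h1]
      rw [vOf_fromA N r j hj c' (by omega), he,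
        if_neg (by omega : ¬ (i:ℕ)+1 < p), if_neg (by omega : ¬ (i:ℕ)+1 = p)]
      have h2 : (i:ℕ) + 1 - 1 = (i:ℕ) := by omega
      rw [h2]
      omega
  · -- summands agree
    intro c hc
    exact HF _ _ (fun i hi => (vOf_toA N r j hj hN c hi).symm)

open Classical in
/-- re-indexing of the "pushed-down" (B) part of the face of the James-Hopf sum -/
lemma sumB {M : Type*} [AddCommMonoid M] (N r j : ℕ) (hj : j ≤ N) (hN : 0 < N)
    (F : (ℕ → ℕ) → M) (HF : ∀ v w, (∀ i, i < r → v i = w i) → F v = F w) :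
    ∑ c ∈ ((Finset.univ.filter (fun c : Fin r → Fin (N+1) => StrictMono c)).filter
        (fun c => ¬ ∃ m, (c m : ℕ) = j)), F (shf (vOf c) j)
    = ∑ c ∈ Finset.univ.filter (fun c : Fin r → Fin N => StrictMono c), F (vOf c) := by
  have memB : ∀ c : Fin r → Fin (N+1),
      c ∈ ((Finset.univ.filter (fun c : Fin r → Fin (N+1) => StrictMono c)).filter
        (fun c => ¬ ∃ m, (c m : ℕ) = j)) ↔ StrictMono c ∧ ∀ m : Fin r, (c m : ℕ) ≠ j := by
    intro c
    simp [Finset.mem_filter]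
  have memS : ∀ c : Fin r → Fin N,
      c ∈ Finset.univ.filter (fun c : Fin r → Fin N => StrictMono c) ↔ StrictMono c := by
    intro c; simp [Finset.mem_filter]
  have hvne : ∀ (c : Fin r → Fin (N+1)), (∀ m : Fin r, (c m : ℕ) ≠ j) →
      ∀ t, vOf c t ≠ j := by
    intro c hc t
    by_cases ht : t < r
    · have : vOf c t = (c ⟨t, ht⟩ : ℕ) := by simp [vOf, dif_pos ht]
      rw [this]; exact hc _
    · have := vOf_sentinel_ge c ht
      omega
  refine Finset.sum_bij' (fun c _ => toB N r j hj hN c) (fun c' _ => fromB N r j hj c')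
    ?_ ?_ ?_ ?_ ?_
  · intro c hc
    obtain ⟨hSM, hne⟩ := (memB c).1 hc
    have hmono := vOf_monoAll hSM
    rw [memS]
    intro a b hab
    have hab' : (a : ℕ) < b := hab
    show (toB N r j hj hN c a : ℕ) < (toB N r j hj hN c b : ℕ)
    show shf (vOf c) j a < shf (vOf c) j b
    have m1 := hmono a b hab'
    have h2 := hvne c hne a
    have h3 := hvne c hne b
    simp only [shf]
    split <;> split <;> omega
  · intro c' hc'
    have hSM : StrictMono c' := (memS c').1 hc'
    have hmono := vOf_monoAll hSM
    rw [memB]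
    constructor
    · intro a b hab
      have hab' : (a : ℕ) < b := hab
      show (fromB N r j hj c' a : ℕ) < (fromB N r j hj c' b : ℕ)
      show unshf (vOf c') j a < unshf (vOf c') j b
      have m1 := hmono a b hab'
      simp only [unshf]
      split <;> split <;> omega
    · intro m
      show ¬ (unshf (vOf c') j m = j)
      simp only [unshf]
      split <;> omega
  · intro c hc
    obtain ⟨hSM, hne⟩ := (memB c).1 hc
    funext i
    apply Fin.ext
    show unshf (vOf (toB N r j hj hN c)) j i = (c i : ℕ)
    rw [← vOf_apply c i]
    have h2 := hvne c hne (i : ℕ)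
    simp only [unshf]
    rw [vOf_toB N r j hj hN c i.isLt]
    simp only [shf]
    split <;> first | omega | (split <;> omega)
  · intro c' hc'
    funext i
    apply Fin.ext
    show shf (vOf (fromB N r j hj c')) j i = (c' i : ℕ)
    rw [← vOf_apply c' i]
    simp only [shf]
    rw [vOf_fromB N r j hj c' i.isLt]
    simp only [unshf]
    split <;> first | omega | (split <;> omega)
  · intro c hc
    exact HF _ _ (fun i hi => (vOf_toB N r j hj hN c hi).symm)

end bij

section main

variable {G : ℕ → Type u} [∀ n, AddCommGroup (G n)]
variable {d : ∀ n : ℕ, ℕ → (G (n + 1) →+ G n)}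
variable {δ : ∀ n : ℕ, ℕ → (G n →+ G (n + 1))}

open Classical in
/-- version of sumB with a propositionally adjusted target bound -/
lemma sumB2 {M : Type*} [AddCommMonoid M] (N N' r j : ℕ) (hNN : N = N') (hj : j ≤ N)
    (hN : 0 < N)
    (F : (ℕ → ℕ) → M) (HF : ∀ v w, (∀ i, i < r → v i = w i) → F v = F w) :
    ∑ c ∈ ((Finset.univ.filter (fun c : Fin r → Fin (N+1) => StrictMono c)).filter
        (fun c => ¬ ∃ m, (c m : ℕ) = j)), F (shf (vOf c) j)
    = ∑ c ∈ Finset.univ.filter (fun c : Fin r → Fin N' => StrictMono c), F (vOf c) := by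
  subst hNN
  exact sumB N r j hj hN F HF

open Classical in
lemma face_jh_pos (h : IsBiDelta G d δ) (k' r' j : ℕ) (x : G (k'+1))
    (hj : j ≤ k'+1 + (r'+1))
    (hx : ∀ t, t ≤ k'+1 → d k' t x = d k' 0 x) :
    d (k'+1+r') j (jamesHopf G δ (k'+1) (r'+1) x)
      = jamesHopf G δ (k'+1) r' x
        + castG G (by omega : k' + (r'+1) = k'+1+r') (jamesHopf G δ k' (r'+1) (d k' 0 x)) := by
  rw [jh_eq, map_sum]
  rw [← Finset.sum_filter_add_sum_filter_not
      (Finset.univ.filter (fun c : Fin (r'+1) → Fin (k'+1+(r'+1)+1) => StrictMono c))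
      (fun c => ∃ m, (c m : ℕ) = j)
      (fun c => d (k'+1+r') j (TT G δ (k'+1) (r'+1) (vOf c) x))]
  have hA : ∀ c ∈ ((Finset.univ.filter
        (fun c : Fin (r'+1) → Fin (k'+1+(r'+1)+1) => StrictMono c)).filter
        (fun c => ∃ m, (c m : ℕ) = j)),
      d (k'+1+r') j (TT G δ (k'+1) (r'+1) (vOf c) x)
        = TT G δ (k'+1) r' (delSh (vOf c) j) x := by
    intro c hc
    rw [Finset.mem_filter, Finset.mem_filter] at hc
    obtain ⟨⟨_, hSM⟩, ⟨m, hm⟩⟩ := hc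
    refine PL_A h (k'+1) r' (vOf c) x j (m : ℕ)
      (fun a b hab hb => vOf_monoAll hSM a b hab)
      (fun i hi => by have := vOf_lt c (show i < r'+1 by omega); omega)
      (by omega) (by rw [vOf_apply c m]; exact hm)
  have hB : ∀ c ∈ ((Finset.univ.filter
        (fun c : Fin (r'+1) → Fin (k'+1+(r'+1)+1) => StrictMono c)).filter
        (fun c => ¬ ∃ m, (c m : ℕ) = j)),
      d (k'+1+r') j (TT G δ (k'+1) (r'+1) (vOf c) x)
        = castG G (by omega : k' + (r'+1) = k'+1+r')
            (TT G δ k' (r'+1) (shf (vOf c) j) (d k' 0 x)) := by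
    intro c hc
    rw [Finset.mem_filter, Finset.mem_filter] at hc
    obtain ⟨⟨_, hSM⟩, hnex⟩ := hc
    refine PL_B h k' r' (vOf c) x j
      (fun a b hab hb => vOf_monoAll hSM a b hab)
      (fun i hi hieq => hnex ⟨⟨i, by omega⟩, by rw [← vOf_apply c ⟨i, by omega⟩]; exact hieq⟩)
      (fun i hi => by have := vOf_lt c (show i < r'+1 by omega); omega)
      (by omega) hx
  rw [Finset.sum_congr rfl hA, Finset.sum_congr rfl hB, ← map_sum]
  have eA : (∑ c ∈ ((Finset.univ.filter
        (fun c : Fin (r'+1) → Fin (k'+1+(r'+1)+1) => StrictMono c)).filter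
        (fun c => ∃ m, (c m : ℕ) = j)), TT G δ (k'+1) r' (delSh (vOf c) j) x)
      = jamesHopf G δ (k'+1) r' x := by
    rw [jh_eq]
    exact sumA (k'+1+(r'+1)) r' j hj (by omega)
      (fun v => TT G δ (k'+1) r' v x) (fun v w hvw => TT_congr _ _ _ _ _ hvw)
  have eB : (∑ c ∈ ((Finset.univ.filter
        (fun c : Fin (r'+1) → Fin (k'+1+(r'+1)+1) => StrictMono c)).filter
        (fun c => ¬ ∃ m, (c m : ℕ) = j)), TT G δ k' (r'+1) (shf (vOf c) j) (d k' 0 x))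
      = jamesHopf G δ k' (r'+1) (d k' 0 x) := by
    rw [jh_eq]
    exact sumB2 (k'+1+(r'+1)) (k'+(r'+1)+1) (r'+1) j (by omega) hj (by omega)
      (fun v => TT G δ k' (r'+1) v (d k' 0 x)) (fun v w hvw => TT_congr _ _ _ _ _ hvw)
  rw [eA, eB]

open Classical in
lemma face_jh_zero (h : IsBiDelta G d δ) (r' j : ℕ) (x : G 0)
    (hj : j ≤ 0 + (r'+1)) :
    d (0+r') j (jamesHopf G δ 0 (r'+1) x)
      = jamesHopf G δ 0 r' x + TT G δ 0 r' sf (Bmap d δ x) := by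
  rw [jh_eq, map_sum]
  rw [← Finset.sum_filter_add_sum_filter_not
      (Finset.univ.filter (fun c : Fin (r'+1) → Fin (0+(r'+1)+1) => StrictMono c))
      (fun c => ∃ m, (c m : ℕ) = j)
      (fun c => d (0+r') j (TT G δ 0 (r'+1) (vOf c) x))]
  have hA : ∀ c ∈ ((Finset.univ.filter
        (fun c : Fin (r'+1) → Fin (0+(r'+1)+1) => StrictMono c)).filter
        (fun c => ∃ m, (c m : ℕ) = j)),
      d (0+r') j (TT G δ 0 (r'+1) (vOf c) x)
        = TT G δ 0 r' (delSh (vOf c) j) x := by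
    intro c hc
    rw [Finset.mem_filter, Finset.mem_filter] at hc
    obtain ⟨⟨_, hSM⟩, ⟨m, hm⟩⟩ := hc
    refine PL_A h 0 r' (vOf c) x j (m : ℕ)
      (fun a b hab hb => vOf_monoAll hSM a b hab)
      (fun i hi => by have := vOf_lt c (show i < r'+1 by omega); omega)
      (by omega) (by rw [vOf_apply c m]; exact hm)
  rw [Finset.sum_congr rfl hA]
  have eA : (∑ c ∈ ((Finset.univ.filter
        (fun c : Fin (r'+1) → Fin (0+(r'+1)+1) => StrictMono c)).filter
        (fun c => ∃ m, (c m : ℕ) = j)), TT G δ 0 r' (delSh (vOf c) j) x)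
      = jamesHopf G δ 0 r' x := by
    rw [jh_eq]
    exact sumA (0+(r'+1)) r' j (by omega) (by omega)
      (fun v => TT G δ 0 r' v x) (fun v w hvw => TT_congr _ _ _ _ _ hvw)
  rw [eA]
  congr 1
  rw [filterB_zero' r' j (0+(r'+1)+1) (by omega) (by omega), Finset.sum_singleton]
  have htup : TT G δ 0 (r'+1) (vOf (complFin' r' j (0+(r'+1)+1) (by omega))) x
      = TT G δ 0 (r'+1) (complF j) x :=
    TT_congr _ _ _ _ _ (vOf_complFin' r' j _ _)
  rw [htup]
  exact PL0_full h r' j x (by omega)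

end main


/-- For an abelian bi-Δ-group `G` and `k ≤ n` (here `n = k + r`),
the James–Hopf homomorphism maps the Cohen group `𝔥_k G` into `𝔥_n G` (membership in
`cohenAll G d (k+r)` says precisely that all the faces of `H_{k,n}(x)` coincide),
and it is a group homomorphism. -/
theorem stmt6 (G : ℕ → Type u) [∀ n, AddCommGroup (G n)]
    (d : ∀ n : ℕ, ℕ → (G (n + 1) →+ G n)) (δ : ∀ n : ℕ, ℕ → (G n →+ G (n + 1)))
    (h : IsBiDelta G d δ) (k r : ℕ) :
    (∀ x ∈ cohenAll G d k, jamesHopf G δ k r x ∈ cohenAll G d (k + r)) ∧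
    ∀ x y : G k, jamesHopf G δ k r (x + y) = jamesHopf G δ k r x + jamesHopf G δ k r y := by
  constructor
  · intro x hx
    match r with
    | 0 =>
        have : jamesHopf G δ k 0 x = x := jh_zero k x
        rw [this]
        exact hx
    | r' + 1 =>
        match k with
        | 0 =>
            show ∀ j, j ≤ (0+r') + 1 → d (0+r') j (jamesHopf G δ 0 (r'+1) x)
              = d (0+r') 0 (jamesHopf G δ 0 (r'+1) x)
            intro j hj
            rw [face_jh_zero h r' j x (by omega), face_jh_zero h r' 0 x (by omega)]
        | k' + 1 =>
            have hx' : ∀ t, t ≤ k'+1 → d k' t x = d k' 0 x := hx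
            show ∀ j, j ≤ (k'+1+r') + 1 → d (k'+1+r') j (jamesHopf G δ (k'+1) (r'+1) x)
              = d (k'+1+r') 0 (jamesHopf G δ (k'+1) (r'+1) x)
            intro j hj
            rw [face_jh_pos h k' r' j x (by omega) hx',
              face_jh_pos h k' r' 0 x (by omega) hx']
  · exact jh_add k r
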